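/- (Computation of Ω_γ) Let k | m, gcd(2^m - 1, 2^k + 1) = 1, e = 2^m - 2^k - 2, d the inverse of e mod 2^m - 1. Let u, v ∈ F_{2^m} with v ≠ 0 and γ ∈ F_{2^k}. Then Ω_γ := ∑_{s ∈ F_{2^m}, Tr^m_k(s) = γ} ∑_{x ∈ F_{2^m}*} (-1)^{Tr_m(ux) + Tr_m(v s x^(2^k+1))} equals 2^m - 2^{m-k} if γ = Tr^m_k(u v^d)², and equals -2^{m-k} otherwise. -/

import Mathlib

open Finset

set_option linter.unusedSectionVars false

section Stmt11Aux

open Polynomial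

variable {F : Type*} [Field F] [Fintype F] [DecidableEq F] [Algebra (ZMod 2) F]

private lemma zmod2_add_self (x : ZMod 2) : x + x = 0 := CharTwo.add_self_eq_zero x

private lemma my_char2 : CharP F 2 :=
  charP_of_injective_algebraMap (algebraMap (ZMod 2) F).injective 2

private lemma trace_nondeg {a : F} (ha : a ≠ 0) :
    ∃ b : F, Algebra.trace (ZMod 2) F (a * b) ≠ 0 := by
  have htr := (traceForm_nondegenerate (ZMod 2) F).1 a
  simp_rw [Algebra.traceForm_apply] at htr
  by_contra! hf
  exact ha (htr hf)

private noncomputable def frobAlg : F ≃ₐ[ZMod 2] F := by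
  haveI := my_char2 (F := F)
  refine AlgEquiv.ofRingEquiv (f := (frobeniusEquiv F 2 : F ≃+* F)) ?_
  intro x
  show (algebraMap (ZMod 2) F x) ^ 2 = algebraMap (ZMod 2) F x
  rw [← map_pow]
  congr 1
  revert x; decide

private lemma trace_sq (a : F) :
    Algebra.trace (ZMod 2) F (a ^ 2) = Algebra.trace (ZMod 2) F a := by
  haveI := my_char2 (F := F)
  have := Algebra.trace_eq_of_algEquiv (frobAlg (F := F)) a
  rw [← this]
  congr 1

private lemma trace_two_pow (j : ℕ) (a : F) :
    Algebra.trace (ZMod 2) F (a ^ 2 ^ j) = Algebra.trace (ZMod 2) F a := by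
  induction j with
  | zero => simp
  | succ j ih => rw [pow_succ, pow_mul, trace_sq, ih]

private noncomputable def ψ (a : F) : ℤ := (-1) ^ (Algebra.trace (ZMod 2) F a).val

private lemma ψ_zero : ψ (0 : F) = 1 := by simp [ψ]

private lemma ψ_add (a b : F) : ψ (a + b) = ψ a * ψ b := by
  unfold ψ
  rw [map_add]
  generalize (Algebra.trace (ZMod 2) F a) = x
  generalize (Algebra.trace (ZMod 2) F b) = y
  revert x y; decide

private lemma ψ_pm (a : F) : ψ a = 1 ∨ ψ a = -1 := by
  unfold ψ
  generalize (Algebra.trace (ZMod 2) F a) = x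
  revert x; decide

private lemma ψ_eq_one_iff (a : F) : ψ a = 1 ↔ Algebra.trace (ZMod 2) F a = 0 := by
  unfold ψ
  generalize (Algebra.trace (ZMod 2) F a) = x
  revert x; decide

private lemma ψ_congr {a b : F}
    (h : Algebra.trace (ZMod 2) F a = Algebra.trace (ZMod 2) F b) : ψ a = ψ b := by
  unfold ψ; rw [h]

/-- character sum over an additively closed finset in char 2 -/
private lemma subgroup_char_sum (S : Finset F) (hadd : ∀ a ∈ S, ∀ b ∈ S, a + b ∈ S)
    (c : F → ℤ) (hc : ∀ a b, c (a + b) = c a * c b) (hpm : ∀ a, c a = 1 ∨ c a = -1) :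
    ∑ t ∈ S, c t = if ∀ t ∈ S, c t = 1 then (S.card : ℤ) else 0 := by
  haveI := my_char2 (F := F)
  split_ifs with h
  · rw [Finset.sum_congr rfl h]; simp
  · push_neg at h
    obtain ⟨t0, ht0S, ht0⟩ := h
    have ht0' : c t0 = -1 := (hpm t0).resolve_left ht0
    have hinv : ∀ t : F, t + t0 + t0 = t := by
      intro t
      have h2 : (2 : F) = 0 := CharP.cast_eq_zero F 2
      have : t0 + t0 = 0 := by rw [← two_mul, h2, zero_mul]
      rw [add_assoc, this, add_zero]
    have key : ∑ t ∈ S, c t = ∑ t ∈ S, c (t + t0) := by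
      refine Finset.sum_nbij' (fun t => t + t0) (fun t => t + t0) ?_ ?_ ?_ ?_ ?_
      · intro a ha; exact hadd a ha t0 ht0S
      · intro a ha; exact hadd a ha t0 ht0S
      · intro a _; exact hinv a
      · intro a _; exact hinv a
      · intro a _; show c a = c (a + t0 + t0); rw [hinv a]
    have heach : ∀ t, c (t + t0) = c t * (-1) := fun t => by rw [hc, ht0']
    have h1 : ∑ t ∈ S, c (t + t0) = (∑ t ∈ S, c t) * (-1) := by
      rw [Finset.sum_congr rfl (fun t _ => heach t), ← Finset.sum_mul]
    linarith

private lemma full_char_sum (w : F) :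
    ∑ x : F, ψ (w * x) = if w = 0 then (Fintype.card F : ℤ) else 0 := by
  have h := subgroup_char_sum (F := F) Finset.univ (by simp)
    (fun x => ψ (w * x)) (by intro a b; rw [mul_add, ψ_add]) (fun a => ψ_pm _)
  rw [h]
  by_cases hw : w = 0
  · rw [if_pos hw, if_pos, Finset.card_univ]
    intro t _; rw [hw, zero_mul, ψ_zero]
  · rw [if_neg hw, if_neg]
    intro hall
    obtain ⟨b, hb⟩ := trace_nondeg hw
    have := hall b (Finset.mem_univ b)
    rw [ψ_eq_one_iff] at this
    exact hb this

/-- additive map: |image| * |kernel| = |F| -/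
private lemma card_image_mul_card_ker (f : F → F) (hadd : ∀ a b, f (a + b) = f a + f b) :
    (Finset.univ.image f).card * (Finset.univ.filter fun x => f x = 0).card
      = Fintype.card F := by
  have hf0 : f 0 = 0 := by
    have h := hadd 0 0
    rw [add_zero] at h
    exact (left_eq_add.mp h)
  have hneg : ∀ a, f (-a) = - f a := by
    intro a
    have h := hadd a (-a)
    rw [add_neg_cancel, hf0] at h
    exact (eq_neg_of_add_eq_zero_right h.symm)
  have hfib : ∀ b ∈ Finset.univ.image f,
      (Finset.univ.filter fun x => f x = b).card
        = (Finset.univ.filter fun x => f x = 0).card := by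
    intro b hb
    obtain ⟨x0, _, hx0⟩ := Finset.mem_image.mp hb
    apply Finset.card_bij (fun t _ => t - x0)
    · intro t ht
      simp only [Finset.mem_filter, Finset.mem_univ, true_and] at ht ⊢
      rw [sub_eq_add_neg, hadd, hneg, ht, hx0]
      ring
    · intro a ha a' ha' h
      exact sub_left_injective h
    · intro x hx
      simp only [Finset.mem_filter, Finset.mem_univ, true_and] at hx
      refine ⟨x + x0, ?_, by ring⟩
      simp only [Finset.mem_filter, Finset.mem_univ, true_and, hadd, hx, hx0]
      ring
  calc (Finset.univ.image f).card * (Finset.univ.filter fun x => f x = 0).card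
      = ∑ b ∈ Finset.univ.image f, (Finset.univ.filter fun x => f x = b).card := by
        rw [Finset.sum_congr rfl hfib, Finset.sum_const, smul_eq_mul]
    _ = Fintype.card F := by
        rw [← Finset.card_eq_sum_card_image, Finset.card_univ]

/-- number of roots of a nonzero polynomial bounds filter card -/
private lemma card_filter_root_le (p : Polynomial F) (hp : p ≠ 0) :
    (Finset.univ.filter fun x => p.eval x = 0).card ≤ p.natDegree := by
  have hsub : (Finset.univ.filter fun x => p.eval x = 0) ⊆ p.roots.toFinset := by
    intro x hx
    simp only [Finset.mem_filter, Finset.mem_univ, true_and] at hx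
    rw [Multiset.mem_toFinset, Polynomial.mem_roots hp]
    exact hx
  calc (Finset.univ.filter fun x => p.eval x = 0).card ≤ p.roots.toFinset.card :=
        Finset.card_le_card hsub
    _ ≤ Multiset.card p.roots := Multiset.toFinset_card_le _
    _ ≤ p.natDegree := p.card_roots'

private lemma card_K_le (k : ℕ) (hk : 0 < k) :
    (Finset.univ.filter fun x : F => x ^ (2^k) = x).card ≤ 2^k := by
  have h1 : (1:ℕ) < 2^k := by
    calc 1 < 2^1 := by norm_num
      _ ≤ 2^k := Nat.pow_le_pow_right (by norm_num) hk
  set p : Polynomial F := X ^ (2^k) - X with hp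
  have hpne : p ≠ 0 := by
    intro h
    have := congrArg (fun q => Polynomial.coeff q (2^k)) h
    simp only [hp, Polynomial.coeff_sub, Polynomial.coeff_X_pow, Polynomial.coeff_zero] at this
    rw [if_pos trivial, Polynomial.coeff_X, if_neg (by omega)] at this
    norm_num at this
  have hdeg : p.natDegree ≤ 2^k := by
    refine le_trans (Polynomial.natDegree_sub_le _ _) ?_
    simp [Polynomial.natDegree_X_pow, Polynomial.natDegree_X]
    omega
  have := card_filter_root_le p hpne
  have heq : (Finset.univ.filter fun x : F => x ^ (2^k) = x)
      = (Finset.univ.filter fun x : F => p.eval x = 0) := by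
    apply Finset.filter_congr
    intro x _
    simp [hp, sub_eq_zero]
  rw [heq]
  omega

private lemma card_Z_le (n kk : ℕ) (hn : 1 ≤ n) (hk : 0 < kk) (f : F → F)
    (hf : ∀ s, f s = ∑ i ∈ Finset.range n, s ^ (2 ^ (kk * i))) :
    (Finset.univ.filter fun x : F => f x = 0).card ≤ 2 ^ (kk * (n-1)) := by
  set p : Polynomial F := ∑ i ∈ Finset.range n, X ^ (2 ^ (kk * i)) with hp
  have heval : ∀ x, p.eval x = f x := by
    intro x; rw [hf]; simp [hp, Polynomial.eval_finset_sum]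
  have hcoeff : p.coeff (2 ^ (kk * (n-1))) = 1 := by
    rw [hp, Polynomial.finset_sum_coeff]
    have hcond : ∀ i ∈ Finset.range n,
        (X ^ (2 ^ (kk * i)) : Polynomial F).coeff (2 ^ (kk * (n-1)))
          = if i = n - 1 then 1 else 0 := by
      intro i hi
      rw [Polynomial.coeff_X_pow]
      congr 1
      simp only [eq_iff_iff]
      constructor
      · intro h
        have h2 := Nat.pow_right_injective (le_refl 2) h
        have h3 := Nat.eq_of_mul_eq_mul_left hk h2
        omega
      · intro h; rw [h]
    rw [Finset.sum_congr rfl hcond, Finset.sum_ite_eq' (Finset.range n) (n-1)]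
    rw [if_pos (Finset.mem_range.mpr (by omega))]
  have hpne : p ≠ 0 := by
    intro h; rw [h] at hcoeff; simp at hcoeff
  have hdeg : p.natDegree ≤ 2 ^ (kk * (n-1)) := by
    apply Polynomial.natDegree_sum_le_of_forall_le
    intro i hi
    refine le_trans (Polynomial.natDegree_X_pow_le _) ?_
    exact Nat.pow_le_pow_right (by norm_num) (Nat.mul_le_mul_left kk (by
      have := Finset.mem_range.mp hi; omega))
  have := card_filter_root_le p hpne
  have heq : (Finset.univ.filter fun x : F => f x = 0)
      = (Finset.univ.filter fun x : F => p.eval x = 0) := by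
    apply Finset.filter_congr; intro x _; simp [heval]
  rw [heq]; omega

end Stmt11Aux

/-- Computation of `Ω_γ`: for `v ≠ 0` and `γ ∈ F_{2^k}`,
`∑_{Tr^m_k(s)=γ} ∑_{x≠0} (-1)^{Tr_m(ux)+Tr_m(v s x^(2^k+1))}` equals
`2^m - 2^{m-k}` if `γ = Tr^m_k(u v^d)²`, and `-2^{m-k}` otherwise. -/
theorem stmt_11 (m k : ℕ) (hm : 0 < m) (hkpos : 0 < k) (hk : k ∣ m)
    (hgcd : Nat.gcd (2 ^ m - 1) (2 ^ k + 1) = 1)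
    (e d : ℕ) (he : e = 2 ^ m - 2 ^ k - 2) (hd : (e * d) % (2 ^ m - 1) = 1)
    (F : Type*) [Field F] [Fintype F] [DecidableEq F] [Algebra (ZMod 2) F]
    (hF : Fintype.card F = 2 ^ m)
    (relTr : F → F) (hrelTr : ∀ s, relTr s = ∑ i ∈ Finset.range (m / k), s ^ (2 ^ (k * i)))
    (u v : F) (hv : v ≠ 0) (γ : F) (hγ : γ ^ (2 ^ k) = γ) :
    ∑ s ∈ Finset.univ.filter (fun s : F => relTr s = γ),
      ∑ x ∈ Finset.univ.filter (fun x : F => x ≠ 0),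
        (-1 : ℤ) ^ (Algebra.trace (ZMod 2) F (u * x)).val *
          (-1 : ℤ) ^ (Algebra.trace (ZMod 2) F (v * s * x ^ (2 ^ k + 1))).val =
      if γ = (relTr (u * v ^ d)) ^ 2 then (2 ^ m - 2 ^ (m - k) : ℤ)
      else -(2 ^ (m - k) : ℤ) := by
  classical
  haveI hchar : CharP F 2 := my_char2
  haveI hfact : Fact (Nat.Prime 2) := ⟨Nat.prime_two⟩
  -- numeric facts
  have hkm : k ≤ m := Nat.le_of_dvd hm hk
  have h2m1 : 2 ≤ 2^m := by
    calc 2 = 2^1 := by norm_num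
      _ ≤ 2^m := Nat.pow_le_pow_right (by norm_num) hm
  have he0 : e ≠ 0 := by
    intro h
    rw [h, zero_mul, Nat.zero_mod] at hd
    exact absurd hd (by norm_num)
  have hpowkm : 2^k + 2 ≤ 2^m := by
    by_contra h
    exact he0 (by omega)
  have hkltm : k < m := by
    by_contra h
    push_neg at h
    have : 2^m ≤ 2^k := Nat.pow_le_pow_right (by norm_num) h
    omega
  obtain ⟨n, hmkn⟩ := hk
  have hnval : m / k = n := by rw [hmkn]; exact Nat.mul_div_cancel_left n hkpos
  simp only [hnval] at hrelTr
  have hn1 : 1 ≤ n := by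
    rcases Nat.eq_zero_or_pos n with h | h
    · rw [h, mul_zero] at hmkn; omega
    · exact h
  have hmk_eq : m - k = k * (n - 1) := by
    obtain ⟨n', rfl⟩ : ∃ n', n = n' + 1 := ⟨n - 1, by omega⟩
    simp only [Nat.add_sub_cancel, Nat.mul_succ] at hmkn ⊢
    omega
  have hsplit2m : (2:ℤ)^m = 2^(m-k) * 2^k := by
    rw [← pow_add]; congr 1; omega
  -- basic field facts
  have hq : ∀ x : F, x ^ (2^m) = x := by
    intro x
    have := FiniteField.pow_card x (K := F)
    rwa [hF] at this
  have hqN : ∀ x : F, x ≠ 0 → x ^ (2^m - 1) = 1 := by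
    intro x hx
    have := FiniteField.pow_card_sub_one_eq_one x hx (K := F)
    rwa [hF] at this
  have hadd_eq_zero : ∀ a b : F, a + b = 0 ↔ a = b := by
    intro a b
    rw [CharTwo.add_eq_iff_eq_add, zero_add]
  -- relTr algebra facts
  have hR0 : relTr 0 = 0 := by
    rw [hrelTr]
    apply Finset.sum_eq_zero
    intro i _
    exact zero_pow (by positivity)
  have hRadd : ∀ a b : F, relTr (a + b) = relTr a + relTr b := by
    intro a b
    rw [hrelTr, hrelTr, hrelTr, ← Finset.sum_add_distrib]
    exact Finset.sum_congr rfl fun i _ => by rw [add_pow_char_pow]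
  have hshift : ∀ s : F, ∑ i ∈ Finset.range n, s ^ 2 ^ (k * (i + 1)) = relTr s := by
    intro s
    have h1 := Finset.sum_range_succ' (fun i => s ^ 2 ^ (k * i)) n
    rw [Finset.sum_range_succ (fun i => s ^ 2 ^ (k * i)) n] at h1
    simp only [Nat.mul_zero, pow_zero, pow_one] at h1
    rw [← hmkn, hq s] at h1
    rw [hrelTr]
    exact (add_right_cancel h1).symm
  have hpow_step : ∀ (s : F) (i : ℕ), (s ^ 2 ^ (k * i)) ^ 2 ^ k = s ^ 2 ^ (k * (i + 1)) := by
    intro s i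
    rw [← pow_mul, ← pow_add, show k * i + k = k * (i + 1) from by ring]
  have hpow_step' : ∀ (s : F) (i : ℕ), (s ^ 2 ^ k) ^ 2 ^ (k * i) = s ^ 2 ^ (k * (i + 1)) := by
    intro s i
    rw [← pow_mul, ← pow_add, show k + k * i = k * (i + 1) from by ring]
  have hRfrob : ∀ s : F, (relTr s) ^ (2 ^ k) = relTr s := by
    intro s
    conv_lhs => rw [hrelTr]
    rw [sum_pow_char_pow]
    rw [Finset.sum_congr rfl (fun i _ => hpow_step s i), hshift]
  have hRtop : ∀ z : F, relTr (z ^ 2 ^ k) = relTr z := by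
    intro z
    rw [hrelTr (z ^ 2 ^ k)]
    rw [Finset.sum_congr rfl (fun i _ => hpow_step' z i), hshift]
  have hker_phi : ∀ z : F, relTr (z ^ 2 ^ k + z) = 0 := by
    intro z
    rw [hRadd, hRtop, CharTwo.add_self_eq_zero]
  -- the subfield K and the kernel Z
  set K : Finset F := Finset.univ.filter (fun t : F => t ^ (2 ^ k) = t) with hKdef
  set Z : Finset F := Finset.univ.filter (fun s : F => relTr s = 0) with hZdef
  have hmemK : ∀ t : F, t ∈ K ↔ t ^ (2 ^ k) = t := by intro t; simp [hKdef]
  have hmemZ : ∀ t : F, t ∈ Z ↔ relTr t = 0 := by intro t; simp [hZdef]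
  have h0K : (0 : F) ∈ K := by rw [hmemK]; exact zero_pow (by positivity)
  have h0Z : (0 : F) ∈ Z := by rw [hmemZ]; exact hR0
  have hKadd : ∀ a ∈ K, ∀ b ∈ K, a + b ∈ K := by
    intro a ha b hb
    rw [hmemK] at ha hb ⊢
    rw [add_pow_char_pow, ha, hb]
  have hZadd : ∀ a ∈ Z, ∀ b ∈ Z, a + b ∈ Z := by
    intro a ha b hb
    rw [hmemZ] at ha hb ⊢
    rw [hRadd, ha, hb, add_zero]
  have hKcard_le : K.card ≤ 2 ^ k := card_K_le k hkpos
  have hZcard_le : Z.card ≤ 2 ^ (m - k) := by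
    rw [hmk_eq]
    exact card_Z_le n k hn1 hkpos relTr hrelTr
  set φf : F → F := fun z => z ^ 2 ^ k + z with hφdef
  have hφadd : ∀ a b : F, φf (a + b) = φf a + φf b := by
    intro a b
    simp only [hφdef]
    rw [add_pow_char_pow]
    ring
  have hcard1 := card_image_mul_card_ker φf hφadd
  have hφker : (Finset.univ.filter fun x => φf x = 0) = K := by
    apply Finset.filter_congr
    intro x _
    simp only [hφdef, eq_iff_iff]
    exact hadd_eq_zero _ _
  rw [hφker, hF] at hcard1
  have hcard2 := card_image_mul_card_ker relTr hRadd
  rw [hF] at hcard2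
  have hcard2' : (Finset.univ.image relTr).card * Z.card = 2 ^ m := hcard2
  have himgφZ : Finset.univ.image φf ⊆ Z := by
    intro t ht
    obtain ⟨z, _, rfl⟩ := Finset.mem_image.mp ht
    rw [hmemZ]
    exact hker_phi z
  have himgRK : Finset.univ.image relTr ⊆ K := by
    intro t ht
    obtain ⟨z, _, rfl⟩ := Finset.mem_image.mp ht
    rw [hmemK]
    exact hRfrob z
  have h2kpos : 0 < 2 ^ k := by positivity
  have h2mkpos : 0 < 2 ^ (m - k) := by positivity
  have h2meq : 2 ^ (m - k) * 2 ^ k = 2 ^ m := by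
    rw [← pow_add]
    congr 1
    omega
  have himgφ_ge : 2 ^ (m - k) ≤ (Finset.univ.image φf).card := by
    by_contra h
    push_neg at h
    have hlt : (Finset.univ.image φf).card * K.card < 2 ^ (m - k) * 2 ^ k :=
      Nat.mul_lt_mul_of_lt_of_le h hKcard_le h2kpos
    rw [h2meq] at hlt
    exact absurd hcard1 (Nat.ne_of_lt hlt)
  have hZcard : Z.card = 2 ^ (m - k) :=
    le_antisymm hZcard_le (le_trans himgφ_ge (Finset.card_le_card himgφZ))
  have hZimg : Finset.univ.image φf = Z :=
    Finset.eq_of_subset_of_card_le himgφZ (by rw [hZcard]; exact himgφ_ge)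
  have himgRcard : (Finset.univ.image relTr).card = 2 ^ k := by
    have h := hcard2'
    rw [hZcard] at h
    have h3 : (Finset.univ.image relTr).card * 2 ^ (m - k) = 2 ^ k * 2 ^ (m - k) := by
      rw [h, ← h2meq, mul_comm]
    exact Nat.eq_of_mul_eq_mul_right h2mkpos h3
  have hKcard : K.card = 2 ^ k :=
    le_antisymm hKcard_le (himgRcard ▸ Finset.card_le_card himgRK)
  have hKimg : Finset.univ.image relTr = K :=
    Finset.eq_of_subset_of_card_le himgRK (by rw [hKcard, himgRcard])
  -- a base point of the fiber
  have hγK : γ ∈ K := by rw [hmemK]; exact hγ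
  rw [← hKimg] at hγK
  obtain ⟨s0, -, hs0⟩ := Finset.mem_image.mp hγK
  -- the coset character sum
  have coset_sum : ∀ w : F,
      (∑ s ∈ Finset.univ.filter (fun s : F => relTr s = γ), ψ (w * s))
        = ψ (w * s0) * (if w ^ 2 ^ k = w then ((2 ^ (m - k) : ℕ) : ℤ) else 0) := by
    intro w
    have hbij : (∑ s ∈ Finset.univ.filter (fun s : F => relTr s = γ), ψ (w * s))
        = ∑ t ∈ Z, ψ (w * s0) * ψ (w * t) := by
      refine Finset.sum_nbij' (fun s => s - s0) (fun t => s0 + t) ?_ ?_ ?_ ?_ ?_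
      · intro a ha
        simp only [Finset.mem_filter, Finset.mem_univ, true_and] at ha
        rw [hmemZ]
        have h1 : relTr (a - s0) + relTr s0 = relTr a := by
          rw [← hRadd, sub_add_cancel]
        rw [ha, hs0] at h1
        have h2 : relTr (a - s0) + γ = 0 + γ := by rw [zero_add, h1]
        exact add_right_cancel h2
      · intro t ht
        simp only [Finset.mem_filter, Finset.mem_univ, true_and]
        rw [hmemZ] at ht
        rw [hRadd, hs0, ht, add_zero]
      · intro a _; ring
      · intro t _; ring
      · intro a _
        rw [← ψ_add, ← mul_add]
        congr 2
        ring
    rw [hbij, ← Finset.mul_sum]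
    congr 1
    have hsub := subgroup_char_sum Z hZadd (fun t => ψ (w * t))
      (fun x y => by rw [mul_add, ψ_add]) (fun x => ψ_pm _)
    rw [hsub, hZcard]
    have hiff : (∀ t ∈ Z, ψ (w * t) = 1) ↔ w ^ 2 ^ k = w := by
      constructor
      · intro hall
        have hA : ∀ z : F, ψ (w * φf z) = 1 := by
          intro z
          exact hall _ (hZimg ▸ Finset.mem_image_of_mem φf (Finset.mem_univ z))
        have hpowz : ∀ z : F, (w * z ^ 2 ^ k) ^ 2 ^ (m - k) = w ^ 2 ^ (m - k) * z := by
          intro z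
          rw [mul_pow, ← pow_mul, ← pow_add, show k + (m - k) = m from by omega, hq z]
        have hA2 : ∀ z : F, ψ (w * φf z) = ψ ((w ^ 2 ^ (m - k) + w) * z) := by
          intro z
          have h1 : ψ (w * z ^ 2 ^ k) = ψ (w ^ 2 ^ (m - k) * z) := by
            apply ψ_congr
            rw [← trace_two_pow (m - k) (w * z ^ 2 ^ k), hpowz]
          simp only [hφdef]
          rw [mul_add, ψ_add, h1, ← ψ_add, ← add_mul]
        have hsumA : ∑ z : F, ψ ((w ^ 2 ^ (m - k) + w) * z) = ((2 ^ m : ℕ) : ℤ) := by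
          rw [← Finset.sum_congr rfl (fun z _ => hA2 z)]
          rw [Finset.sum_congr rfl (fun z _ => hA z)]
          rw [Finset.sum_const, Finset.card_univ, hF]
          simp
        have hfull := full_char_sum (w ^ 2 ^ (m - k) + w)
        rw [hsumA, hF] at hfull
        by_cases hcond : w ^ 2 ^ (m - k) + w = 0
        · have hw : w ^ 2 ^ (m - k) = w := (hadd_eq_zero _ _).mp hcond
          calc w ^ 2 ^ k = (w ^ 2 ^ (m - k)) ^ 2 ^ k := by rw [hw]
            _ = w ^ 2 ^ m := by
                rw [← pow_mul, ← pow_add, show m - k + k = m from by omega]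
            _ = w := hq w
        · rw [if_neg hcond] at hfull
          exfalso
          have : (0:ℤ) < ((2 ^ m : ℕ) : ℤ) := by positivity
          omega
      · intro hw t ht
        rw [← hZimg] at ht
        obtain ⟨z, -, rfl⟩ := Finset.mem_image.mp ht
        simp only [hφdef]
        rw [mul_add, ψ_add]
        have h1 : ψ (w * z ^ 2 ^ k) = ψ (w * z) := by
          apply ψ_congr
          have h2 : w * z ^ 2 ^ k = (w * z) ^ 2 ^ k := by rw [mul_pow, hw]
          rw [h2, trace_two_pow]
        rw [h1]
        rcases ψ_pm (w * z) with h | h <;> rw [h] <;> norm_num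
    rw [if_congr hiff rfl rfl]
  -- the annihilator of K is the kernel of relTr
  have annih_easy : ∀ a : F, relTr a = 0 → ∀ t ∈ K,
      Algebra.trace (ZMod 2) F (a * t) = 0 := by
    intro a ha t ht
    rw [hmemK] at ht
    have haZ : a ∈ Z := by rw [hmemZ]; exact ha
    rw [← hZimg] at haZ
    obtain ⟨z, -, rfl⟩ := Finset.mem_image.mp haZ
    simp only [hφdef]
    rw [add_mul, map_add]
    have h1 : Algebra.trace (ZMod 2) F (z ^ 2 ^ k * t) = Algebra.trace (ZMod 2) F (z * t) := by
      have h2 : z ^ 2 ^ k * t = (z * t) ^ 2 ^ k := by rw [mul_pow, ht]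
      rw [h2, trace_two_pow]
    rw [h1, zmod2_add_self]
  have annih_count : ∀ a : F, (∀ t ∈ K, Algebra.trace (ZMod 2) F (a * t) = 0) → relTr a = 0 := by
    intro a hall
    set Ann := Finset.univ.filter
      (fun b : F => ∀ t ∈ K, Algebra.trace (ZMod 2) F (b * t) = 0) with hAnnDef
    have hmemAnn : ∀ b : F, b ∈ Ann ↔ ∀ t ∈ K, Algebra.trace (ZMod 2) F (b * t) = 0 := by
      intro b; simp [hAnnDef]
    have hZAnn : Z ⊆ Ann := by
      intro b hb
      rw [hmemAnn]
      exact annih_easy b ((hmemZ b).mp hb)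
    have hinner : ∀ b : F, ∑ t ∈ K, ψ (b * t)
        = if b ∈ Ann then ((2 ^ k : ℕ) : ℤ) else 0 := by
      intro b
      have h := subgroup_char_sum K hKadd (fun t => ψ (b * t))
        (fun x y => by rw [mul_add, ψ_add]) (fun x => ψ_pm _)
      rw [h, hKcard]
      have hiff2 : (∀ t ∈ K, ψ (b * t) = 1) ↔ b ∈ Ann := by
        rw [hmemAnn]
        constructor
        · intro h1 t ht; rw [← ψ_eq_one_iff]; exact h1 t ht
        · intro h1 t ht; rw [ψ_eq_one_iff]; exact h1 t ht
      rw [if_congr hiff2 rfl rfl]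
    have hB : ∑ b : F, ∑ t ∈ K, ψ (b * t) = (Ann.card : ℤ) * ((2 ^ k : ℕ) : ℤ) := by
      rw [Finset.sum_congr rfl (fun b _ => hinner b)]
      rw [Finset.sum_ite_mem, Finset.univ_inter, Finset.sum_const]
      simp [mul_comm]
    have hB2 : ∑ b : F, ∑ t ∈ K, ψ (b * t) = ((2 ^ m : ℕ) : ℤ) := by
      rw [Finset.sum_comm]
      have hin : ∀ t ∈ K, (∑ b : F, ψ (b * t)) = if t = 0 then ((2 ^ m : ℕ) : ℤ) else 0 := by
        intro t _
        have h1 : ∀ b : F, ψ (b * t) = ψ (t * b) := fun b => by rw [mul_comm]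
        rw [Finset.sum_congr rfl (fun b _ => h1 b), full_char_sum, hF]
      rw [Finset.sum_congr rfl hin, Finset.sum_ite_eq' K 0]
      rw [if_pos h0K]
    have hAnnCardZ : (Ann.card : ℤ) * ((2 ^ k : ℕ) : ℤ) = ((2 ^ m : ℕ) : ℤ) := by
      rw [← hB]; exact hB2
    have hAnnCardN : Ann.card * 2 ^ k = 2 ^ m := by exact_mod_cast hAnnCardZ
    have hAnnCard : Ann.card = 2 ^ (m - k) := by
      apply Nat.eq_of_mul_eq_mul_right h2kpos
      rw [hAnnCardN, ← h2meq, mul_comm]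
    have hZA : Z = Ann := Finset.eq_of_subset_of_card_le hZAnn (by rw [hAnnCard, hZcard])
    have haA : a ∈ Ann := by rw [hmemAnn]; exact hall
    rw [← hZA] at haA
    exact (hmemZ a).mp haA
  -- facts about the exponent d
  have hvd1 : v ^ ((2 ^ k + 1) * d) * v = 1 := by
    obtain ⟨c, hc⟩ : ∃ c, e * d = (2 ^ m - 1) * c + 1 :=
      ⟨e * d / (2 ^ m - 1), by
        have h := Nat.div_add_mod (e * d) (2 ^ m - 1)
        rw [hd] at h
        omega⟩
    have hvN : v ^ (2 ^ m - 1) = 1 := hqN v hv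
    have h1 : v ^ ((2 ^ m - 1) * d) = 1 := by rw [pow_mul, hvN, one_pow]
    have h2 : (2 ^ m - 1) * d = e * d + (2 ^ k + 1) * d := by
      rw [← add_mul]
      congr 1
      omega
    have h3 : v ^ (e * d) = v := by
      rw [hc, pow_add, pow_mul, hvN, one_pow, one_mul, pow_one]
    rw [h2, pow_add, h3] at h1
    rw [mul_comm]
    exact h1
  have hvd0 : v ^ d ≠ 0 := pow_ne_zero d hv
  have hvE : (v ^ d) ^ (2 ^ k + 1) * v = 1 := by
    rw [← pow_mul, mul_comm d (2 ^ k + 1)]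
    exact hvd1
  have hEne : (2 : ℕ) ^ k + 1 ≠ 0 := by positivity
  have hE_inj : ∀ a b : F, a ^ (2 ^ k + 1) = b ^ (2 ^ k + 1) → a = b := by
    intro a b hab
    by_cases ha : a = 0
    · subst ha
      rw [zero_pow hEne] at hab
      exact (pow_eq_zero_iff hEne).mp hab.symm |>.symm
    · have hb : b ≠ 0 := by
        intro hb
        subst hb
        rw [zero_pow hEne] at hab
        exact ha ((pow_eq_zero_iff hEne).mp hab)
      have hgne : a * b⁻¹ ≠ 0 := mul_ne_zero ha (inv_ne_zero hb)
      have hgE : (a * b⁻¹) ^ (2 ^ k + 1) = 1 := by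
        rw [mul_pow, inv_pow, hab, mul_inv_cancel₀ (pow_ne_zero _ hb)]
      have hgN : (a * b⁻¹) ^ (2 ^ m - 1) = 1 := hqN _ hgne
      have h1 : orderOf (a * b⁻¹) ∣ 2 ^ k + 1 := orderOf_dvd_of_pow_eq_one hgE
      have h2 : orderOf (a * b⁻¹) ∣ 2 ^ m - 1 := orderOf_dvd_of_pow_eq_one hgN
      have h3 : orderOf (a * b⁻¹) ∣ 1 := hgcd ▸ Nat.dvd_gcd h2 h1
      have hg1 : a * b⁻¹ = 1 := orderOf_eq_one_iff.mp (Nat.dvd_one.mp h3)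
      exact (mul_inv_eq_one₀ hb).mp hg1
  have hsq_inj : ∀ a b : F, a ^ 2 = b ^ 2 → a = b := by
    intro a b hab
    have h1 : (a + b) * (a - b) = 0 := by rw [← sq_sub_sq, hab, sub_self]
    rcases mul_eq_zero.mp h1 with h | h
    · exact (hadd_eq_zero a b).mp h
    · exact sub_eq_zero.mp h
  -- square root of s0 and relTr-squaring
  have hRsq : ∀ a : F, (relTr a) ^ 2 = relTr (a ^ 2) := by
    intro a
    rw [hrelTr, hrelTr, sum_pow_char]
    apply Finset.sum_congr rfl
    intro i _
    rw [← pow_mul, mul_comm, pow_mul]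
  have hr2 : (s0 ^ 2 ^ (m - 1)) ^ 2 = s0 := by
    rw [← pow_mul, show 2 ^ (m - 1) * 2 = 2 ^ m from by
      rw [← pow_succ]; congr 1; omega]
    exact hq s0
  set r : F := s0 ^ 2 ^ (m - 1) with hrdef
  -- the final character condition
  set β : F := u * v ^ d with hβdef
  have htr_eq : ∀ t : F, Algebra.trace (ZMod 2) F (β * t + s0 * t ^ 2)
      = Algebra.trace (ZMod 2) F ((β + r) * t) := by
    intro t
    rw [add_mul, map_add, map_add]
    congr 1
    rw [show s0 * t ^ 2 = (r * t) ^ 2 from by rw [mul_pow, hr2], trace_sq]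
  have hcond_iff : (∀ t ∈ K, ψ (β * t + s0 * t ^ 2) = 1) ↔ γ = (relTr β) ^ 2 := by
    have h1 : (∀ t ∈ K, ψ (β * t + s0 * t ^ 2) = 1) ↔ relTr (β + r) = 0 := by
      constructor
      · intro hall
        apply annih_count
        intro t ht
        have := hall t ht
        rw [ψ_eq_one_iff, htr_eq] at this
        exact this
      · intro h0 t ht
        rw [ψ_eq_one_iff, htr_eq]
        exact annih_easy _ h0 t ht
    rw [h1, hRadd]
    constructor
    · intro h2
      have h3 : relTr β = relTr r := (hadd_eq_zero _ _).mp h2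
      have h4 : (relTr r) ^ 2 = γ := by rw [hRsq, hr2, hs0]
      rw [h3, h4]
    · intro h2
      have h4 : (relTr r) ^ 2 = γ := by rw [hRsq, hr2, hs0]
      have h5 : relTr β = relTr r := by
        apply hsq_inj
        rw [h4, h2]
      rw [h5, CharTwo.add_self_eq_zero]
  -- main computation
  have hEfix : ∀ (s x : F), v * s * x ^ (2 ^ k + 1) = (v * x ^ (2 ^ k + 1)) * s := by
    intro s x
    ring
  set Kstar : Finset F := K.erase 0 with hKstardef
  set Xset : Finset F := Finset.univ.filter
    (fun x : F => x ≠ 0 ∧ (v * x ^ (2 ^ k + 1)) ^ 2 ^ k = v * x ^ (2 ^ k + 1)) with hXdef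
  have hmemX : ∀ x : F, x ∈ Xset ↔
      (x ≠ 0 ∧ (v * x ^ (2 ^ k + 1)) ^ 2 ^ k = v * x ^ (2 ^ k + 1)) := by
    intro x; simp [hXdef]
  have hmemKstar : ∀ t : F, t ∈ Kstar ↔ (t ≠ 0 ∧ t ^ 2 ^ k = t) := by
    intro t; rw [hKstardef, Finset.mem_erase, hmemK]
  have key_t : ∀ t ∈ Kstar, v * (v ^ d * t) ^ (2 ^ k + 1) = t ^ 2 := by
    intro t ht
    obtain ⟨htne, htK⟩ := (hmemKstar t).mp ht
    rw [mul_pow]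
    have h1 : t ^ (2 ^ k + 1) = t ^ 2 := by
      rw [pow_add, pow_one, htK, ← pow_two]
    rw [h1, show v * ((v ^ d) ^ (2 ^ k + 1) * t ^ 2)
        = ((v ^ d) ^ (2 ^ k + 1) * v) * t ^ 2 from by ring, hvE, one_mul]
  have h2k1 : 2 * 2 ^ (k - 1) = 2 ^ k := by
    rw [← pow_succ']
    congr 1
    omega
  set C : ℤ := ((2 ^ (m - k) : ℕ) : ℤ) with hCdef
  have hbij2 : ∑ t ∈ Kstar, (ψ (β * t) * ψ (s0 * t ^ 2) * C)
      = ∑ x ∈ Xset, (ψ (u * x) * ψ ((v * x ^ (2 ^ k + 1)) * s0) * C) := by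
    refine Finset.sum_nbij' (fun t => v ^ d * t)
      (fun x => (v * x ^ (2 ^ k + 1)) ^ 2 ^ (k - 1)) ?_ ?_ ?_ ?_ ?_
    · intro t ht
      obtain ⟨htne, htK⟩ := (hmemKstar t).mp ht
      rw [hmemX]
      refine ⟨mul_ne_zero hvd0 htne, ?_⟩
      rw [key_t t ht, ← pow_mul, mul_comm 2 (2 ^ k), pow_mul, htK]
    · intro x hx
      obtain ⟨hxne, hxP⟩ := (hmemX x).mp hx
      rw [hmemKstar]
      have hcne : v * x ^ (2 ^ k + 1) ≠ 0 := mul_ne_zero hv (pow_ne_zero _ hxne)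
      refine ⟨pow_ne_zero _ hcne, ?_⟩
      rw [← pow_mul, mul_comm (2 ^ (k - 1)) (2 ^ k), pow_mul, hxP]
    · intro t ht
      obtain ⟨htne, htK⟩ := (hmemKstar t).mp ht
      show (v * (v ^ d * t) ^ (2 ^ k + 1)) ^ 2 ^ (k - 1) = t
      rw [key_t t ht, ← pow_mul, h2k1, htK]
    · intro x hx
      obtain ⟨hxne, hxP⟩ := (hmemX x).mp hx
      apply hE_inj
      have hc1 : ((v * x ^ (2 ^ k + 1)) ^ 2 ^ (k - 1)) ^ (2 ^ k + 1) = v * x ^ (2 ^ k + 1) := by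
        rw [← pow_mul, mul_add (2 ^ (k - 1)), mul_one, pow_add,
          mul_comm (2 ^ (k - 1)) (2 ^ k), pow_mul, hxP, ← pow_add,
          show 2 ^ (k - 1) + 2 ^ (k - 1) = 2 ^ k from by rw [← two_mul]; exact h2k1, hxP]
      rw [mul_pow, hc1, show (v ^ d) ^ (2 ^ k + 1) * (v * x ^ (2 ^ k + 1))
          = ((v ^ d) ^ (2 ^ k + 1) * v) * x ^ (2 ^ k + 1) from by ring, hvE, one_mul]
    · intro t ht
      have e1 : u * (v ^ d * t) = β * t := by rw [hβdef]; ring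
      have e2 : (v * (v ^ d * t) ^ (2 ^ k + 1)) * s0 = s0 * t ^ 2 := by
        rw [key_t t ht]; ring
      rw [e1, e2]
  -- assemble
  have h0term : ψ (β * (0:F)) * ψ (s0 * (0:F) ^ 2) = 1 := by
    rw [mul_zero, show ((0:F) ^ 2) = 0 from by rw [zero_pow]; norm_num, mul_zero, ψ_zero]
    norm_num
  have hKsum : ∑ t ∈ K, ψ (β * t) * ψ (s0 * t ^ 2)
      = if γ = (relTr β) ^ 2 then ((2 ^ k : ℕ) : ℤ) else 0 := by
    have hgc : ∀ t : F, ψ (β * t) * ψ (s0 * t ^ 2) = ψ (β * t + s0 * t ^ 2) :=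
      fun t => (ψ_add _ _).symm
    have hmul : ∀ a b : F, ψ (β * (a + b) + s0 * (a + b) ^ 2)
        = ψ (β * a + s0 * a ^ 2) * ψ (β * b + s0 * b ^ 2) := by
      intro a b
      rw [← ψ_add]
      congr 1
      rw [CharTwo.add_sq]
      ring
    have h := subgroup_char_sum K hKadd (fun t => ψ (β * t + s0 * t ^ 2))
      (fun a b => hmul a b) (fun a => ψ_pm _)
    rw [Finset.sum_congr rfl (fun t _ => hgc t), h, hKcard, if_congr hcond_iff rfl rfl]
  have hKstar_sum : ∑ t ∈ Kstar, (ψ (β * t) * ψ (s0 * t ^ 2) * C)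
      = ((if γ = (relTr β) ^ 2 then ((2 ^ k : ℕ) : ℤ) else 0) - 1) * C := by
    rw [← Finset.sum_mul]
    congr 1
    have h := Finset.sum_erase_add K (fun t => ψ (β * t) * ψ (s0 * t ^ 2)) h0K
    rw [h0term] at h
    rw [← hKstardef] at h
    rw [← hKsum]
    omega
  -- the main calc
  calc ∑ s ∈ Finset.univ.filter (fun s : F => relTr s = γ),
      ∑ x ∈ Finset.univ.filter (fun x : F => x ≠ 0),
        (-1 : ℤ) ^ (Algebra.trace (ZMod 2) F (u * x)).val *
          (-1 : ℤ) ^ (Algebra.trace (ZMod 2) F (v * s * x ^ (2 ^ k + 1))).val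
      = ∑ s ∈ Finset.univ.filter (fun s : F => relTr s = γ),
          ∑ x ∈ Finset.univ.filter (fun x : F => x ≠ 0),
            ψ (u * x) * ψ ((v * x ^ (2 ^ k + 1)) * s) := by
        refine Finset.sum_congr rfl fun s _ => Finset.sum_congr rfl fun x _ => ?_
        rw [show v * s * x ^ (2 ^ k + 1) = (v * x ^ (2 ^ k + 1)) * s from by ring]
        rfl
    _ = ∑ x ∈ Finset.univ.filter (fun x : F => x ≠ 0),
          ∑ s ∈ Finset.univ.filter (fun s : F => relTr s = γ),
            ψ (u * x) * ψ ((v * x ^ (2 ^ k + 1)) * s) := Finset.sum_comm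
    _ = ∑ x ∈ Finset.univ.filter (fun x : F => x ≠ 0),
          (if (v * x ^ (2 ^ k + 1)) ^ 2 ^ k = v * x ^ (2 ^ k + 1)
            then ψ (u * x) * ψ ((v * x ^ (2 ^ k + 1)) * s0) * C else 0) := by
        refine Finset.sum_congr rfl fun x _ => ?_
        rw [← Finset.mul_sum, coset_sum (v * x ^ (2 ^ k + 1))]
        split_ifs <;> ring
    _ = ∑ x ∈ Xset, ψ (u * x) * ψ ((v * x ^ (2 ^ k + 1)) * s0) * C := by
        rw [← Finset.sum_filter, hXdef, Finset.filter_filter]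
    _ = ((if γ = (relTr β) ^ 2 then ((2 ^ k : ℕ) : ℤ) else 0) - 1) * C := by
        rw [← hbij2, hKstar_sum]
    _ = if γ = (relTr (u * v ^ d)) ^ 2 then (2 ^ m - 2 ^ (m - k) : ℤ)
        else -(2 ^ (m - k) : ℤ) := by
        rw [← hβdef]
        split_ifs with hC
        · rw [hCdef]
          push_cast
          rw [sub_mul, one_mul, ← pow_add, show k + (m - k) = m from by omega]
        · rw [hCdef]
          push_cast
          ring
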